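/- arXiv:1801.02467 — 2 statements merged into one kernel-verified Lean document; each statement's English description precedes it below -/
import Mathlib

section
/- Let Λ : D̃ → D̃ be a map on irreducible Dirichlet forms that is monotone (E ≤ E' implies Λ(E) ≤ Λ(E')) and homogeneous (Λ(cE) = cΛ(E) for c > 0). If E, E' ∈ D̃ and 0 < ρ < ρ', then one cannot have both Λ(E) ≤ ρE and Λ(E') ≥ ρ'E'. -/
/-- The Dirichlet form on `ℝ^V`, `V = Fin N`, with coefficients `c j₁ j₂`:
`E(u) = ∑_{j₁ < j₂} c j₁ j₂ (u j₁ - u j₂)²`. -/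
noncomputable def dForm {N : ℕ} (c : Fin N → Fin N → ℝ) (u : Fin N → ℝ) : ℝ :=
  ∑ j₁ : Fin N, ∑ j₂ ∈ Finset.univ.filter (fun j₂ => j₁ < j₂), c j₁ j₂ * (u j₁ - u j₂) ^ 2

/-- `E` is a Dirichlet form on `ℝ^(Fin N)` (member of `D`). -/
def IsDirichletForm {N : ℕ} (E : (Fin N → ℝ) → ℝ) : Prop :=
  ∃ c : Fin N → Fin N → ℝ, (∀ j₁ j₂, 0 ≤ c j₁ j₂) ∧ E = dForm c

/-- `E` is an irreducible Dirichlet form (member of `D̃`). -/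
def IsIrreducibleForm {N : ℕ} (E : (Fin N → ℝ) → ℝ) : Prop :=
  IsDirichletForm E ∧ ∀ u, E u = 0 ↔ ∃ k : ℝ, ∀ j, u j = k

lemma dForm_nonneg {N : ℕ} {c : Fin N → Fin N → ℝ} (hc : ∀ j₁ j₂, 0 ≤ c j₁ j₂)
    (u : Fin N → ℝ) : 0 ≤ dForm c u := by
  apply Finset.sum_nonneg; intro i _; apply Finset.sum_nonneg; intro j _
  exact mul_nonneg (hc i j) (sq_nonneg _)

lemma dForm_smul {N : ℕ} (c : Fin N → Fin N → ℝ) (t : ℝ) (u : Fin N → ℝ) :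
    dForm c (t • u) = t ^ 2 * dForm c u := by
  unfold dForm
  rw [Finset.mul_sum]
  refine Finset.sum_congr rfl fun i _ => ?_
  rw [Finset.mul_sum]
  refine Finset.sum_congr rfl fun j _ => ?_
  simp [Pi.smul_apply, smul_eq_mul]; ring

lemma dForm_sub_const {N : ℕ} (c : Fin N → Fin N → ℝ) (k : ℝ) (u : Fin N → ℝ) :
    dForm c (fun j => u j - k) = dForm c u := by
  unfold dForm
  refine Finset.sum_congr rfl fun i _ => Finset.sum_congr rfl fun j _ => ?_
  ring_nf

lemma dForm_continuous {N : ℕ} (c : Fin N → Fin N → ℝ) : Continuous (dForm c) := by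
  unfold dForm
  fun_prop

lemma irred_smul {N : ℕ} {E : (Fin N → ℝ) → ℝ} (hE : IsIrreducibleForm E)
    {a : ℝ} (ha : 0 < a) : IsIrreducibleForm (fun u => a * E u) := by
  obtain ⟨⟨c, hc, rfl⟩, hzero⟩ := hE
  constructor
  · refine ⟨fun i j => a * c i j, fun i j => mul_nonneg ha.le (hc i j), ?_⟩
    funext u
    unfold dForm
    rw [Finset.mul_sum]
    refine Finset.sum_congr rfl fun i _ => ?_
    rw [Finset.mul_sum]
    exact Finset.sum_congr rfl fun j _ => by ring
  · intro u
    rw [← hzero u]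
    constructor
    · intro h
      rcases mul_eq_zero.mp h with h | h
      · exact absurd h ha.ne'
      · exact h
    · intro h; simp only [h, mul_zero]

/-- Comparability of irreducible forms. -/
lemma comparable {N : ℕ} (hN : 2 ≤ N) {E E' : (Fin N → ℝ) → ℝ}
    (hE : IsIrreducibleForm E) (hE' : IsIrreducibleForm E') :
    ∃ C : ℝ, 0 < C ∧ ∀ u, E u ≤ C * E' u := by
  obtain ⟨⟨c, hc, rfl⟩, hz⟩ := hE
  obtain ⟨⟨c', hc', rfl⟩, hz'⟩ := hE'
  set i0 : Fin N := ⟨0, by omega⟩ with hi0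
  set i1 : Fin N := ⟨1, by omega⟩ with hi1
  have hne : i0 ≠ i1 := by simp [hi0, hi1, Fin.ext_iff]
  -- the compact set
  set K : Set (Fin N → ℝ) := Metric.sphere 0 1 ∩ {v | v i0 = 0} with hK
  have hKc : IsCompact K := by
    apply (isCompact_sphere (0 : Fin N → ℝ) 1).inter_right
    exact isClosed_eq (continuous_apply i0) continuous_const
  have hKne : K.Nonempty := by
    refine ⟨Pi.single i1 1, ?_, ?_⟩
    · simp [Pi.norm_single]
    · simp [Pi.single_eq_of_ne hne]
  have hKnonconst : ∀ v ∈ K, ¬ ∃ k : ℝ, ∀ j, v j = k := by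
    rintro v ⟨hv1, hv0⟩ ⟨k, hk⟩
    have : k = 0 := by rw [← hk i0]; exact hv0
    have hv : v = 0 := by funext j; rw [hk j, this]; rfl
    rw [hv] at hv1
    simp at hv1
  -- min of E' on K
  obtain ⟨vm, hvm, hvmin⟩ := hKc.exists_isMinOn hKne (dForm_continuous c').continuousOn
  obtain ⟨vM, hvM, hvmax⟩ := hKc.exists_isMaxOn hKne (dForm_continuous c).continuousOn
  set m := dForm c' vm with hm
  set M := dForm c vM with hMdef
  have hm0 : 0 < m := by
    rcases lt_or_eq_of_le (dForm_nonneg hc' vm) with h | h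
    · exact h
    · exact absurd ((hz' vm).mp h.symm) (hKnonconst vm hvm)
  have hM0 : 0 ≤ M := dForm_nonneg hc vM
  refine ⟨(M + 1) / m, div_pos (by linarith) hm0, fun u => ?_⟩
  by_cases hu : ∃ k : ℝ, ∀ j, u j = k
  · rw [(hz u).mpr hu, (hz' u).mpr hu, mul_zero]
  -- normalize
  set v : Fin N → ℝ := fun j => u j - u i0 with hv
  have hveq : dForm c v = dForm c u := dForm_sub_const c (u i0) u
  have hveq' : dForm c' v = dForm c' u := dForm_sub_const c' (u i0) u
  have hvne : v ≠ 0 := by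
    intro h
    apply hu
    refine ⟨u i0, fun j => ?_⟩
    have := congrFun h j
    simp [hv] at this
    linarith
  set t := ‖v‖ with ht
  have ht0 : 0 < t := norm_pos_iff.mpr hvne
  set w : Fin N → ℝ := t⁻¹ • v with hw
  have hwK : w ∈ K := by
    constructor
    · simp only [hw, mem_sphere_iff_norm, sub_zero, norm_smul, norm_inv,
        Real.norm_eq_abs, abs_of_pos ht0]
      exact inv_mul_cancel₀ ht0.ne' 
    · show w i0 = 0
      simp [hw, hv]
  have hvw : v = t • w := by
    rw [hw, smul_smul, mul_inv_cancel₀ ht0.ne', one_smul]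
  have h1 : dForm c u ≤ t ^ 2 * M := by
    rw [← hveq, hvw, dForm_smul]
    exact mul_le_mul_of_nonneg_left (hvmax hwK) (sq_nonneg t)
  have h2 : t ^ 2 * m ≤ dForm c' u := by
    rw [← hveq', hvw, dForm_smul]
    exact mul_le_mul_of_nonneg_left (hvmin hwK) (sq_nonneg t)
  calc dForm c u ≤ t ^ 2 * M := h1
    _ ≤ (M + 1) / m * (t ^ 2 * m) := by
        rw [div_mul_eq_mul_div, le_div_iff₀ hm0]
        nlinarith [mul_nonneg (sq_nonneg t) hm0.le]
    _ ≤ (M + 1) / m * dForm c' u :=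
        mul_le_mul_of_nonneg_left h2 (le_of_lt (div_pos (by linarith) hm0))

/-- Lemma 4.1: if `Λ : D̃ → D̃` is monotone and positively
homogeneous, `E, E' ∈ D̃` and `0 < ρ < ρ'`, one cannot have both
`Λ(E) ≤ ρ E` and `Λ(E') ≥ ρ' E'`. -/
theorem no_two_eigenvalue_inequalities
    (N : ℕ) (hN : 2 ≤ N)
    (Λ : ((Fin N → ℝ) → ℝ) → ((Fin N → ℝ) → ℝ))
    (hmap : ∀ E, IsIrreducibleForm E → IsIrreducibleForm (Λ E))
    (hmono : ∀ E E', IsIrreducibleForm E → IsIrreducibleForm E' →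
      (∀ u, E u ≤ E' u) → ∀ u, Λ E u ≤ Λ E' u)
    (hhom : ∀ E, IsIrreducibleForm E → ∀ a : ℝ, 0 < a →
      Λ (fun u => a * E u) = fun u => a * Λ E u)
    (E E' : (Fin N → ℝ) → ℝ)
    (hE : IsIrreducibleForm E) (hE' : IsIrreducibleForm E')
    (ρ ρ' : ℝ) (hρ0 : 0 < ρ) (hρρ' : ρ < ρ') :
    ¬ ((∀ u, Λ E u ≤ ρ * E u) ∧ (∀ u, ρ' * E' u ≤ Λ E' u)) := by
  rintro ⟨h1, h2⟩
  obtain ⟨C, hC, hCle⟩ := comparable hN hE' hE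
  obtain ⟨C', hC', hC'le⟩ := comparable hN hE hE'
  set F : ℕ → ((Fin N → ℝ) → ℝ) := fun n => Λ^[n] E' with hF
  have hF0 : F 0 = E' := rfl
  have hFsucc : ∀ n, F (n + 1) = Λ (F n) := fun n => Function.iterate_succ_apply' Λ n E'
  have hFirr : ∀ n, IsIrreducibleForm (F n) := by
    intro n
    induction n with
    | zero => exact hE'
    | succ n ih => rw [hFsucc]; exact hmap _ ih
  have hlow : ∀ n, ∀ u, ρ' ^ n * E' u ≤ F n u := by
    intro n
    induction n with
    | zero => intro u; simp [hF0]
    | succ n ih =>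
      intro u
      have hρ'0 : (0:ℝ) < ρ' := lt_trans hρ0 hρρ'
      have hmul : IsIrreducibleForm (fun u => ρ' ^ n * E' u) := irred_smul hE' (by positivity)
      have step : ∀ u, Λ (fun u => ρ' ^ n * E' u) u ≤ Λ (F n) u :=
        hmono _ _ hmul (hFirr n) ih
      have heq := hhom E' hE' (ρ' ^ n) (by positivity)
      rw [heq] at step
      have hstep := step u
      simp only at hstep
      rw [hFsucc]
      calc ρ' ^ (n + 1) * E' u = ρ' ^ n * (ρ' * E' u) := by ring
        _ ≤ ρ' ^ n * Λ E' u := mul_le_mul_of_nonneg_left (h2 u) (by positivity)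
        _ ≤ Λ (F n) u := hstep
  have hup : ∀ n, ∀ u, F n u ≤ C * ρ ^ n * E u := by
    intro n
    induction n with
    | zero => intro u; simpa [hF0] using hCle u
    | succ n ih =>
      intro u
      have hmul : IsIrreducibleForm (fun u => C * ρ ^ n * E u) := irred_smul hE (by positivity)
      have step := hmono _ _ (hFirr n) hmul ih u
      have heq := hhom E hE (C * ρ ^ n) (by positivity)
      rw [heq] at step
      simp only at step
      rw [hFsucc]
      calc Λ (F n) u ≤ C * ρ ^ n * Λ E u := step
        _ ≤ C * ρ ^ n * (ρ * E u) := mul_le_mul_of_nonneg_left (h1 u) (by positivity)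
        _ = C * ρ ^ (n + 1) * E u := by ring
  -- test function
  set i0 : Fin N := ⟨0, by omega⟩ with hi0
  set i1 : Fin N := ⟨1, by omega⟩ with hi1
  have hne : i0 ≠ i1 := by simp [hi0, hi1, Fin.ext_iff]
  set u0 : Fin N → ℝ := Pi.single i1 1 with hu0def
  have hu0 : ¬ ∃ k : ℝ, ∀ j, u0 j = k := by
    rintro ⟨k, hk⟩
    have ha := hk i0
    have hb := hk i1
    rw [hu0def, Pi.single_eq_of_ne hne] at ha
    rw [hu0def, Pi.single_eq_same] at hb
    rw [← ha] at hb
    exact one_ne_zero hb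
  have hE'pos : 0 < E' u0 := by
    obtain ⟨⟨c', hc', rfl⟩, hz'⟩ := hE'
    rcases lt_or_eq_of_le (dForm_nonneg hc' u0) with h | h
    · exact h
    · exact absurd ((hz' u0).mp h.symm) hu0
  have key2 : ∀ n, ρ' ^ n ≤ C * C' * ρ ^ n := by
    intro n
    have key : ρ' ^ n * E' u0 ≤ C * C' * ρ ^ n * E' u0 := by
      refine (hlow n u0).trans ((hup n u0).trans ?_)
      calc C * ρ ^ n * E u0 ≤ C * ρ ^ n * (C' * E' u0) :=
            mul_le_mul_of_nonneg_left (hC'le u0) (by positivity)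
        _ = C * C' * ρ ^ n * E' u0 := by ring
    exact le_of_mul_le_mul_right key hE'pos
  obtain ⟨n, hn⟩ := pow_unbounded_of_one_lt (C * C')
    (show (1:ℝ) < ρ' / ρ from (one_lt_div hρ0).mpr hρρ')
  rw [div_pow, lt_div_iff₀ (by positivity)] at hn
  exact absurd (key2 n) (not_le.mpr hn)
end

section
/- Let Z be an affine subspace of ℝⁿ, K ⊆ Z compact convex with x̃ ∈ int(K), and let U ⊆ Z be an open set containing ∂K with x̃ ∉ closure(U). Let K̃ be the convex hull of K \ U. Then K̃ ⊆ int(K), ∂K̃ ⊆ closure(U), and x̃ ∈ int(K̃). -/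
/-- Combination of an interior point and a point of a convex set lies in the interior,
working inside the subtype of an affine subspace. -/
private lemma combo_mem_interior_aux {n : ℕ} {Z : AffineSubspace ℝ (Fin n → ℝ)}
    {K : Set Z} (hKconv : Convex ℝ (Subtype.val '' K))
    {a b : Z} (ha : a ∈ interior K) (hb : b ∈ K)
    {t : ℝ} (ht0 : 0 < t) (ht1 : t ≤ 1)
    {z : Z} (hz : (z : Fin n → ℝ) = t • (a : Fin n → ℝ) + (1 - t) • (b : Fin n → ℝ)) :
    z ∈ interior K := by
  have hmem : ∀ w : Z, t⁻¹ • ((w : Fin n → ℝ) - (b : Fin n → ℝ)) + (b : Fin n → ℝ) ∈ Z :=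
    fun w => by
      have := Z.smul_vsub_vadd_mem t⁻¹ w.2 b.2 b.2
      simpa [vsub_eq_sub, vadd_eq_add, add_comm] using this
  set h : Z → Z := fun w => ⟨t⁻¹ • ((w : Fin n → ℝ) - (b : Fin n → ℝ)) + (b : Fin n → ℝ),
    hmem w⟩ with hh
  have hcont : Continuous h := by
    apply Continuous.subtype_mk
    fun_prop
  have hza : h z = a := by
    apply Subtype.ext
    show t⁻¹ • ((z : Fin n → ℝ) - (b : Fin n → ℝ)) + (b : Fin n → ℝ) = a
    rw [hz]
    have : t • (a : Fin n → ℝ) + (1 - t) • (b : Fin n → ℝ) - (b : Fin n → ℝ)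
        = t • ((a : Fin n → ℝ) - (b : Fin n → ℝ)) := by
      rw [smul_sub, sub_smul, one_smul]; abel
    rw [this, smul_smul, inv_mul_cancel₀ ht0.ne', one_smul]
    abel
  have hSsub : h ⁻¹' (interior K) ⊆ K := by
    intro w hw
    have hwK : h w ∈ K := interior_subset hw
    have hcombo : (w : Fin n → ℝ) = t • ((h w : Fin n → ℝ)) + (1 - t) • (b : Fin n → ℝ) := by
      show (w : Fin n → ℝ)
          = t • (t⁻¹ • ((w : Fin n → ℝ) - (b : Fin n → ℝ)) + (b : Fin n → ℝ))
            + (1 - t) • (b : Fin n → ℝ)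
      rw [smul_add, smul_smul, mul_inv_cancel₀ ht0.ne', one_smul, sub_smul, one_smul]
      abel
    have : (w : Fin n → ℝ) ∈ Subtype.val '' K := by
      rw [hcombo]
      exact hKconv ⟨h w, hwK, rfl⟩ ⟨b, hb, rfl⟩ ht0.le (by linarith) (by ring)
    obtain ⟨w', hw', hval⟩ := this
    rwa [Subtype.val_injective hval] at hw'
  have hzmem : z ∈ h ⁻¹' (interior K) := by
    simp only [Set.mem_preimage, hza]; exact ha
  exact interior_maximal hSsub (hcont.isOpen_preimage _ isOpen_interior) hzmem

private lemma convex_val_interior {n : ℕ} {Z : AffineSubspace ℝ (Fin n → ℝ)}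
    {K : Set Z} (hKconv : Convex ℝ (Subtype.val '' K)) :
    Convex ℝ (Subtype.val '' interior K) := by
  rintro x ⟨p, hp, rfl⟩ y ⟨q, hq, rfl⟩ s t hs ht hst
  have hZmem : s • (p : Fin n → ℝ) + t • (q : Fin n → ℝ) ∈ Z := by
    have := Z.smul_vsub_vadd_mem s p.2 q.2 q.2
    simp only [vsub_eq_sub, vadd_eq_add, smul_sub] at this
    have h1t : t = 1 - s := by linarith
    rw [h1t, sub_smul, one_smul]
    convert this using 1
    abel
  refine ⟨⟨s • (p : Fin n → ℝ) + t • (q : Fin n → ℝ), hZmem⟩, ?_, rfl⟩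
  rcases eq_or_lt_of_le hs with hs0 | hs0
  · have hzq : (⟨s • (p : Fin n → ℝ) + t • (q : Fin n → ℝ), hZmem⟩ : Z) = q := by
      apply Subtype.ext
      show s • (p : Fin n → ℝ) + t • (q : Fin n → ℝ) = q
      rw [← hs0, zero_smul, zero_add]
      have : t = 1 := by linarith
      rw [this, one_smul]
    rw [hzq]; exact hq
  · exact combo_mem_interior_aux hKconv hp (interior_subset hq) hs0 (by linarith)
      (by show _ = s • (p : Fin n → ℝ) + (1 - s) • (q : Fin n → ℝ); rw [show (1:ℝ) - s = t by linarith])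

/-- let `K` be compact convex in an affine subspace `Z` of `ℝⁿ`
with `x̃ ∈ int K`, and `U ⊆ Z` open with `∂K ⊆ U` and `x̃ ∉ closure U`.
Let `K̃` be the convex hull of `K \ U`. Then `K̃ ⊆ int K`, `∂K̃ ⊆ closure U`,
and `x̃ ∈ int K̃`. -/
theorem convex_hull_of_complement_of_boundary_nbhd
    (n : ℕ) (Z : AffineSubspace ℝ (Fin n → ℝ))
    (K : Set Z) (hKc : IsCompact K) (hKconv : Convex ℝ (Subtype.val '' K))
    (xt : Z) (hxt : xt ∈ interior K)
    (U : Set Z) (hU : IsOpen U) (hUK : frontier K ⊆ U) (hxtU : xt ∉ closure U)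
    (Kt : Set Z)
    (hKt : Kt = Subtype.val ⁻¹' (convexHull ℝ (Subtype.val '' (K \ U)))) :
    Kt ⊆ interior K ∧ frontier Kt ⊆ closure U ∧ xt ∈ interior Kt := by
  -- `K \ U ⊆ interior K`
  have hKU_int : K \ U ⊆ interior K := by
    intro x hx
    by_contra hxi
    exact hx.2 (hUK ⟨subset_closure hx.1, hxi⟩)
  -- claim 1 : `Kt ⊆ interior K`
  have h1 : Kt ⊆ interior K := by
    rw [hKt]
    intro x hx
    have hsub : convexHull ℝ (Subtype.val '' (K \ U)) ⊆ Subtype.val '' interior K :=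
      convexHull_min (Set.image_mono hKU_int) (convex_val_interior hKconv)
    have := hsub hx
    obtain ⟨x', hx', hval⟩ := this
    rwa [Subtype.val_injective hval] at hx'
  -- `K \ U ⊆ Kt`
  have hKU_Kt : K \ U ⊆ Kt := by
    rw [hKt]
    intro x hx
    exact subset_convexHull ℝ _ ⟨x, hx, rfl⟩
  -- the key open set
  have hWopen : IsOpen (interior K ∩ (closure U)ᶜ) :=
    isOpen_interior.inter isClosed_closure.isOpen_compl
  have hWsub : interior K ∩ (closure U)ᶜ ⊆ Kt := by
    intro x hx
    exact hKU_Kt ⟨interior_subset hx.1, fun hxU => hx.2 (subset_closure hxU)⟩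
  -- claim 3 : `xt ∈ interior Kt`
  have h3 : xt ∈ interior Kt := interior_maximal hWsub hWopen ⟨hxt, hxtU⟩
  -- claim 2 : `frontier Kt ⊆ closure U`
  have h2 : frontier Kt ⊆ closure U := by
    intro x hx
    by_contra hxU
    have hxK : x ∈ K := by
      have : closure Kt ⊆ K := by
        rw [← hKc.isClosed.closure_eq]
        exact closure_mono (h1.trans interior_subset)
      exact this hx.1
    have : x ∈ interior Kt :=
      interior_maximal hWsub hWopen ⟨hKU_int ⟨hxK, fun h => hxU (subset_closure h)⟩, hxU⟩
    exact hx.2 this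
  exact ⟨h1, h2, h3⟩
end
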